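/- arXiv:1106.5276 — 2 statements merged into one kernel-verified Lean document; each statement's English description precedes it below -/
import Mathlib

section
/- In H(ℤ) with the standard generating set, for any integers x,y ≥ 0 and any z > 0, the word length satisfies |(x,y,z-1)| ≤ |(x,y,z)|, where heights z are taken in ℤ + ε(x,y) with ε(x,y)=1/2 if x,y are both odd and 0 otherwise. That is, word length is nondecreasing in the height coordinate above 0. -/
/-- Heisenberg multiplication in exponential coordinates. -/
noncomputable def Hmul (a b : ℝ × ℝ × ℝ) : ℝ × ℝ × ℝ :=
  (a.1 + b.1, a.2.1 + b.2.1, a.2.2 + b.2.2 + (a.1 * b.2.1 - a.2.1 * b.1) / 2)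

/-- The standard (symmetric) generating set of H(ℤ). -/
def stdGen : Set (ℝ × ℝ × ℝ) :=
  {(1, 0, 0), (-1, 0, 0), (0, 1, 0), (0, -1, 0)}

/-- Word length with respect to the standard generators. -/
noncomputable def wordLength (p : ℝ × ℝ × ℝ) : ℕ :=
  sInf {n | ∃ l : List (ℝ × ℝ × ℝ),
    l.length = n ∧ (∀ a ∈ l, a ∈ stdGen) ∧ l.foldl Hmul (0, 0, 0) = p}

noncomputable def ep (l : List (ℝ × ℝ × ℝ)) : ℝ × ℝ × ℝ := l.foldl Hmul (0, 0, 0)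

lemma hmul_zero_left (a : ℝ × ℝ × ℝ) : Hmul (0, 0, 0) a = a := by
  simp [Hmul]

lemma hmul_assoc (a b c : ℝ × ℝ × ℝ) : Hmul (Hmul a b) c = Hmul a (Hmul b c) := by
  simp only [Hmul, Prod.mk.injEq]
  refine ⟨by ring, by ring, by ring⟩

lemma foldl_hmul (l : List (ℝ × ℝ × ℝ)) (p : ℝ × ℝ × ℝ) :
    l.foldl Hmul p = Hmul p (ep l) := by
  induction l generalizing p with
  | nil => simp [ep, Hmul]
  | cons a l ih =>
    simp only [ep, List.foldl_cons, hmul_zero_left] at *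
    rw [ih (Hmul p a), ih a, hmul_assoc]

lemma ep_cons (a : ℝ × ℝ × ℝ) (l : List (ℝ × ℝ × ℝ)) : ep (a :: l) = Hmul a (ep l) := by
  simp only [ep, List.foldl_cons, hmul_zero_left]
  exact foldl_hmul l a

lemma ep_append (l₁ l₂ : List (ℝ × ℝ × ℝ)) : ep (l₁ ++ l₂) = Hmul (ep l₁) (ep l₂) := by
  simp only [ep, List.foldl_append]
  exact foldl_hmul l₂ _

lemma gen_cases {a : ℝ × ℝ × ℝ} (h : a ∈ stdGen) :
    a = (1, 0, 0) ∨ a = (-1, 0, 0) ∨ a = (0, 1, 0) ∨ a = (0, -1, 0) := by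
  simpa [stdGen] using h

lemma gen_int {a : ℝ × ℝ × ℝ} (h : a ∈ stdGen) :
    ∃ a1 a2 : ℤ, a = ((a1 : ℝ), (a2 : ℝ), 0) := by
  rcases gen_cases h with h | h | h | h <;> subst h
  · exact ⟨1, 0, by norm_num⟩
  · exact ⟨-1, 0, by norm_num⟩
  · exact ⟨0, 1, by norm_num⟩
  · exact ⟨0, -1, by norm_num⟩

lemma gen_omega {a b : ℝ × ℝ × ℝ} (ha : a ∈ stdGen) (hb : b ∈ stdGen) :
    ∃ m : ℤ, (m : ℝ) = a.1 * b.2.1 - a.2.1 * b.1 ∧ |(m : ℝ)| ≤ 1 := by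
  rcases gen_cases ha with h | h | h | h <;> subst h <;>
    rcases gen_cases hb with h | h | h | h <;> subst h <;>
    first
    | ((refine ⟨0, ?_, ?_⟩ <;> norm_num) <;> done)
    | ((refine ⟨1, ?_, ?_⟩ <;> norm_num) <;> done)
    | ((refine ⟨-1, ?_, ?_⟩ <;> norm_num) <;> done)

lemma ep_int (l : List (ℝ × ℝ × ℝ)) (h : ∀ a ∈ l, a ∈ stdGen) :
    ∃ p q r : ℤ, ep l = ((p : ℝ), (q : ℝ), (r : ℝ) / 2) := by
  induction l with
  | nil => exact ⟨0, 0, 0, by simp [ep]⟩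
  | cons a l ih =>
    obtain ⟨p, q, r, hl⟩ := ih (fun b hb => h b (List.mem_cons_of_mem a hb))
    obtain ⟨a1, a2, ha⟩ := gen_int (h a (List.mem_cons_self))
    refine ⟨a1 + p, a2 + q, r + (a1 * q - a2 * p), ?_⟩
    rw [ep_cons, hl, ha]
    simp only [Hmul, Prod.mk.injEq]
    refine ⟨by push_cast; ring, by push_cast; ring, by push_cast; ring⟩

lemma ep_fst (l : List (ℝ × ℝ × ℝ)) : (ep l).1 = (l.map (·.1)).sum := by
  induction l with
  | nil => simp [ep]
  | cons a l ih => rw [ep_cons]; simp [Hmul, ih]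

lemma ep_snd (l : List (ℝ × ℝ × ℝ)) : (ep l).2.1 = (l.map (·.2.1)).sum := by
  induction l with
  | nil => simp [ep]
  | cons a l ih => rw [ep_cons]; simp [Hmul, ih]

lemma ep_swap (u v : List (ℝ × ℝ × ℝ)) (a b : ℝ × ℝ × ℝ) :
    ep (u ++ a :: b :: v) = ((ep (u ++ b :: a :: v)).1, (ep (u ++ b :: a :: v)).2.1,
      (ep (u ++ b :: a :: v)).2.2 + (a.1 * b.2.1 - a.2.1 * b.1)) := by
  rw [ep_append, ep_append, ep_cons, ep_cons, ep_cons, ep_cons]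
  simp only [Hmul, Prod.mk.injEq]
  refine ⟨by ring, by ring, by ring⟩

lemma ivt (N : ℕ) : ∀ f : ℕ → ℝ,
    (∀ k < N, ∃ m : ℤ, (m : ℝ) = f (k + 1) - f k ∧ |(m : ℝ)| ≤ 1) →
    ∀ t : ℝ, (∃ m : ℤ, t = f 0 + m) → f N ≤ t → t ≤ f 0 → ∃ k ≤ N, f k = t := by
  induction N with
  | zero =>
    intro f _ t _ h1 h2
    exact ⟨0, le_refl 0, le_antisymm h1 h2⟩
  | succ N ih =>
    intro f hstep t hcoset h1 h2
    by_cases hc : f 1 ≤ t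
    · -- t between f 1 and f 0, differ by integer of abs ≤ 1
      obtain ⟨m, hm, hm1⟩ := hstep 0 (Nat.succ_pos N)
      obtain ⟨m0, hm0⟩ := hcoset
      rcases eq_or_lt_of_le h2 with h | h
      · exact ⟨0, Nat.zero_le _, h.symm⟩
      · -- t < f 0, t = f 0 + m0 so m0 ≤ -1, and f 1 ≤ t so f 0 + m ≤ f 0 + m0,
        -- with m ≥ -1 ⇒ m0 ≥ -1 ⇒ m0 = -1 = m ⇒ f 1 = t
        have hm0le : (m0 : ℝ) < 0 := by linarith
        have hm0lt : m0 < 0 := by exact_mod_cast hm0le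
        have hm0le' : (m0 : ℝ) ≤ -1 := by exact_mod_cast (by omega : m0 ≤ -1)
        have hmge : (-1 : ℝ) ≤ m := (abs_le.mp hm1).1
        have : f 1 = f 0 + m := by linarith [hm]
        have hm0ge : (-1 : ℝ) ≤ m0 := by
          have : f 0 + (m : ℝ) ≤ f 0 + m0 := by rw [← this, ← hm0]; exact hc
          linarith
        have hm0eq : (m0 : ℝ) = -1 := le_antisymm hm0le' hm0ge
        have hmeq : (m : ℝ) = -1 := by
          have : f 0 + (m:ℝ) ≤ f 0 + (-1:ℝ) := by rw [← this, ← hm0eq, ← hm0]; exact hc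
          linarith
        exact ⟨1, by omega, by rw [‹f 1 = f 0 + m›, hmeq, hm0, hm0eq]⟩
    · push_neg at hc
      obtain ⟨k, hk, hfk⟩ := ih (fun k => f (k + 1))
        (fun k hk => hstep (k + 1) (by omega)) t
        (by
          obtain ⟨m0, hm0⟩ := hcoset
          obtain ⟨m, hm, _⟩ := hstep 0 (Nat.succ_pos N)
          exact ⟨m0 - m, by push_cast; linarith⟩)
        h1 (le_of_lt hc)
      exact ⟨k + 1, by omega, hfk⟩

lemma ep_single (a : ℝ × ℝ × ℝ) : ep [a] = a := by
  exact hmul_zero_left a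

/-- the key step: words of the same length realize every coset value `t` with `|t| ≤ |z|`. -/
lemma main_lemma (n : ℕ) : ∀ l : List (ℝ × ℝ × ℝ), l.length = n → (∀ a ∈ l, a ∈ stdGen) →
    ∀ t : ℝ, (∃ m : ℤ, t = (ep l).2.2 + m) → |t| ≤ |(ep l).2.2| →
    ∃ l', l'.length = n ∧ (∀ a ∈ l', a ∈ stdGen) ∧
      ep l' = ((ep l).1, (ep l).2.1, t) := by
  induction n using Nat.strong_induction_on with
  | _ n ih =>
  intro l hlen hgen t hcoset habs
  match l with
  | [] =>
    have hz : ep ([] : List (ℝ × ℝ × ℝ)) = (0,0,0) := rfl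
    rw [hz] at habs ⊢
    simp only [abs_zero] at habs
    have : t = 0 := abs_eq_zero.mp (le_antisymm habs (abs_nonneg t))
    refine ⟨[], hlen, ?_, ?_⟩
    · intro a h; exact absurd h List.not_mem_nil
    · rw [hz, this]
  | a :: w =>
    have ha' : a ∈ stdGen := hgen a (List.mem_cons_self)
    have hgw : ∀ b ∈ w, b ∈ stdGen := fun b hb => hgen b (List.mem_cons_of_mem a hb)
    obtain ⟨p, q, r, hw⟩ := ep_int w hgw
    obtain ⟨a1, a2, ha⟩ := gen_int ha'
    set cc : ℤ := a1 * q - a2 * p with hcc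
    set c : ℝ := (cc : ℝ) / 2 with hc
    set zr : ℝ := (r : ℝ) / 2 with hzr
    have hzl : (ep (a :: w)).2.2 = zr + c := by
      rw [ep_cons, hw, ha]; simp only [Hmul]; rw [hc, hcc]; push_cast; ring
    have hxl : (ep (a :: w)).1 = (a1 : ℝ) + p := by
      rw [ep_cons, hw, ha]; simp only [Hmul]
    have hyl : (ep (a :: w)).2.1 = (a2 : ℝ) + q := by
      rw [ep_cons, hw, ha]; simp only [Hmul]
    obtain ⟨m0, hm0⟩ := hcoset
    rw [hzl] at hm0 habs
    -- choose the split t = t'' + d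
    set d : ℝ := max (t - |zr|) (-|c|) with hd
    have habs' : |t| ≤ |zr| + |c| := le_trans habs (abs_add_le zr c)
    have htub : t ≤ |zr| + |c| := le_trans (le_abs_self t) habs'
    have htlb : -(|zr| + |c|) ≤ t := neg_le_of_abs_le habs'
    have hd1 : -|c| ≤ d := le_max_right _ _
    have hd2 : d ≤ |c| := max_le (by linarith) (by linarith [abs_nonneg c])
    have hdc : ∃ mm : ℤ, d = c + mm := by
      rcases max_choice (t - |zr|) (-|c|) with hmax | hmax
      · rcases abs_cases zr with ⟨h1, _⟩ | ⟨h1, _⟩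
        · exact ⟨m0, by rw [← hd] at hmax; rw [hmax, h1]; linarith⟩
        · refine ⟨r + m0, ?_⟩
          rw [← hd] at hmax; rw [hmax, h1]; push_cast
          have : zr = (r : ℝ) / 2 := hzr
          linarith
      · rcases abs_cases c with ⟨h1, _⟩ | ⟨h1, _⟩
        · refine ⟨-cc, ?_⟩
          rw [← hd] at hmax; rw [hmax, h1]; push_cast
          have : c = (cc : ℝ) / 2 := hc
          linarith
        · exact ⟨0, by rw [← hd] at hmax; rw [hmax, h1]; push_cast; ring⟩
    obtain ⟨mm, hmm⟩ := hdc
    set t'' : ℝ := t - d with ht''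
    have ht''u : t'' ≤ |zr| := by
      have := le_max_left (t - |zr|) (-|c|)
      rw [← hd] at this; simp only [ht'']; linarith
    have ht''l : -|zr| ≤ t'' := by
      have h2 : d ≤ t + |zr| := max_le (by linarith [abs_nonneg zr]) (by linarith)
      simp only [ht'']; linarith
    have ht''abs : |t''| ≤ |zr| := abs_le.mpr ⟨ht''l, ht''u⟩
    -- apply the induction hypothesis to w
    have hwlen : w.length < n := by rw [← hlen]; simp
    obtain ⟨w'', hw''len, hw''gen, hw''ep⟩ :=
      ih w.length hwlen w rfl hgw t''
        ⟨m0 - mm, by rw [hw]; simp only [ht'']; push_cast; rw [hm0, hmm]; push_cast; ring⟩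
        (by rw [hw]; exact ht''abs)
    rw [hw] at hw''ep
    -- the insertion walk
    set N : ℕ := w.length with hN
    have hw''N : w''.length = N := hw''len
    set f : ℕ → ℝ := fun k => (ep (w''.take k ++ a :: w''.drop k)).2.2 with hf
    have hf0 : f 0 = t'' + c := by
      simp only [hf, List.take_zero, List.drop_zero, List.nil_append]
      rw [ep_cons, hw''ep, ha]; simp only [Hmul]; rw [hc, hcc]; push_cast; ring
    have hfN : f N = t'' - c := by
      simp only [hf]
      rw [List.take_of_length_le (le_of_eq hw''N), List.drop_of_length_le (le_of_eq hw''N)]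
      have : w'' ++ a :: ([] : List (ℝ × ℝ × ℝ)) = w'' ++ [a] := rfl
      rw [this, ep_append, ep_single, hw''ep, ha]
      simp only [Hmul]; rw [hc, hcc]; push_cast; ring
    have hstep : ∀ k, k < N → ∃ m : ℤ, (m : ℝ) = f k - f (k + 1) ∧ |(m : ℝ)| ≤ 1 := by
      intro k hk
      have hk' : k < w''.length := by rw [hw''N]; exact hk
      have hdropk : w''.drop k = w''[k] :: w''.drop (k + 1) :=
        List.drop_eq_getElem_cons hk'
      have htakek : w''.take (k + 1) = w''.take k ++ [w''[k]] := by
        rw [List.take_succ, List.getElem?_eq_getElem hk']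
        rfl
      have hb : w''[k] ∈ stdGen := hw''gen _ (List.getElem_mem hk')
      obtain ⟨m, hm, hm1⟩ := gen_omega ha' hb
      refine ⟨m, ?_, hm1⟩
      have h1 : w''.take k ++ a :: w''.drop k
          = w''.take k ++ a :: w''[k] :: w''.drop (k + 1) := by rw [hdropk]
      have h2 : w''.take (k + 1) ++ a :: w''.drop (k + 1)
          = w''.take k ++ w''[k] :: a :: w''.drop (k + 1) := by
        rw [htakek, List.append_assoc]; rfl
      have := ep_swap (w''.take k) (w''.drop (k + 1)) a w''[k]
      simp only [hf]
      rw [h1, h2, this, hm]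
      ring
    -- find the insertion point
    have hmain : ∃ j, j ≤ N ∧ f j = t := by
      rcases le_or_gt 0 c with hcpos | hcneg
      · have habsc : |c| = c := abs_of_nonneg hcpos
        have hstep' : ∀ k < N, ∃ m : ℤ, (m : ℝ) = f (k + 1) - f k ∧ |(m : ℝ)| ≤ 1 := by
          intro k hk
          obtain ⟨m, hm, hm1⟩ := hstep k hk
          exact ⟨-m, by push_cast; linarith, by rwa [Int.cast_neg, abs_neg]⟩
        obtain ⟨k, hk, hfk⟩ := ivt N f hstep' t
          ⟨mm, by push_cast; linarith [hmm, hf0]⟩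
          (by rw [hfN]; rw [habsc] at hd1; linarith)
          (by rw [hf0]; rw [habsc] at hd2; linarith)
        exact ⟨k, hk, hfk⟩
      · have habsc : |c| = -c := abs_of_neg hcneg
        set g : ℕ → ℝ := fun k => f (N - k) with hg
        have hstep' : ∀ k < N, ∃ m : ℤ, (m : ℝ) = g (k + 1) - g k ∧ |(m : ℝ)| ≤ 1 := by
          intro k hk
          have h1 : N - k = (N - (k + 1)) + 1 := by omega
          obtain ⟨m, hm, hm1⟩ := hstep (N - (k + 1)) (by omega)
          refine ⟨m, ?_, hm1⟩
          simp only [hg]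
          rw [h1, hm]
        obtain ⟨k, hk, hfk⟩ := ivt N g hstep' t
          ⟨mm + cc, by simp only [hg, Nat.sub_zero]; push_cast; linarith [hmm, hfN, hc]⟩
          (by simp only [hg, Nat.sub_self]; rw [hf0]; rw [habsc] at hd2; linarith)
          (by simp only [hg, Nat.sub_zero]; rw [hfN]; rw [habsc] at hd1; linarith)
        exact ⟨N - k, Nat.sub_le N k, hfk⟩
    obtain ⟨j, hj, hfj⟩ := hmain
    refine ⟨w''.take j ++ a :: w''.drop j, ?_, ?_, ?_⟩
    · -- length
      have hjl : j ≤ w''.length := by rw [hw''N]; exact hj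
      simp only [List.length_append, List.length_cons, List.length_take, List.length_drop]
      rw [← hlen]
      simp only [List.length_cons]
      omega
    · intro b hb
      rcases List.mem_append.mp hb with hb | hb
      · exact hw''gen b (List.take_subset j w'' hb)
      · rcases List.mem_cons.mp hb with hb | hb
        · rw [hb]; exact ha'
        · exact hw''gen b (List.drop_subset j w'' hb)
    · -- endpoint
      have htd : w''.take j ++ w''.drop j = w'' := List.take_append_drop j w''
      rw [Prod.ext_iff, Prod.ext_iff]
      refine ⟨?_, ?_, ?_⟩
      · rw [ep_fst, hxl]
        rw [List.map_append, List.sum_append, List.map_cons, List.sum_cons]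
        have : ((w''.take j).map (·.1)).sum + ((w''.drop j).map (·.1)).sum
            = (w''.map (·.1)).sum := by rw [← htd, List.map_append, List.sum_append]; rw [htd]
        have hx'' : (w''.map (·.1)).sum = (p : ℝ) := by
          rw [← ep_fst, hw''ep]
        have hafst : a.1 = (a1 : ℝ) := by rw [ha]
        rw [hafst] at *
        linarith
      · rw [ep_snd, hyl]
        rw [List.map_append, List.sum_append, List.map_cons, List.sum_cons]
        have : ((w''.take j).map (·.2.1)).sum + ((w''.drop j).map (·.2.1)).sum
            = (w''.map (·.2.1)).sum := by rw [← htd, List.map_append, List.sum_append]; rw [htd]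
        have hy'' : (w''.map (·.2.1)).sum = (q : ℝ) := by
          rw [← ep_snd, hw''ep]
        have hasnd : a.2.1 = (a2 : ℝ) := by rw [ha]
        rw [hasnd] at *
        linarith
      · exact hfj

lemma ep_repX (n : ℕ) : ep (List.replicate n ((1:ℝ), (0:ℝ), (0:ℝ))) = ((n : ℝ), 0, 0) := by
  induction n with
  | zero => simp [ep]
  | succ n ih =>
    rw [List.replicate_succ, ep_cons, ih]
    simp only [Hmul, Prod.mk.injEq]
    push_cast
    refine ⟨by ring, by ring, by ring⟩

lemma ep_repY (n : ℕ) : ep (List.replicate n ((0:ℝ), (1:ℝ), (0:ℝ))) = (0, (n : ℝ), 0) := by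
  induction n with
  | zero => simp [ep]
  | succ n ih =>
    rw [List.replicate_succ, ep_cons, ih]
    simp only [Hmul, Prod.mk.injEq]
    push_cast
    refine ⟨by ring, by ring, by ring⟩

def posLoop : List (ℝ × ℝ × ℝ) := [(1,0,0), (0,1,0), (-1,0,0), (0,-1,0)]
def negLoop : List (ℝ × ℝ × ℝ) := [(0,1,0), (1,0,0), (0,-1,0), (-1,0,0)]

lemma ep_posLoop : ep posLoop = (0, 0, 1) := by
  simp only [posLoop, ep, List.foldl, Hmul]
  norm_num

lemma ep_negLoop : ep negLoop = (0, 0, -1) := by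
  simp only [negLoop, ep, List.foldl, Hmul]
  norm_num

lemma ep_posLoops (k : ℕ) : ep (List.flatten (List.replicate k posLoop)) = (0, 0, (k : ℝ)) := by
  induction k with
  | zero => simp [ep]
  | succ k ih =>
    rw [List.replicate_succ, List.flatten_cons, ep_append, ep_posLoop, ih]
    simp only [Hmul, Prod.mk.injEq]
    push_cast
    refine ⟨by ring, by ring, by ring⟩

lemma ep_negLoops (k : ℕ) : ep (List.flatten (List.replicate k negLoop)) = (0, 0, -(k : ℝ)) := by
  induction k with
  | zero => simp [ep]
  | succ k ih =>
    rw [List.replicate_succ, List.flatten_cons, ep_append, ep_negLoop, ih]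
    simp only [Hmul, Prod.mk.injEq]
    push_cast
    refine ⟨by ring, by ring, by ring⟩

lemma gen_posLoop : ∀ a ∈ posLoop, a ∈ stdGen := by
  intro a ha
  simp only [posLoop, List.mem_cons, List.not_mem_nil, or_false] at ha
  rcases ha with h | h | h | h <;> subst h <;> simp [stdGen]

lemma gen_negLoop : ∀ a ∈ negLoop, a ∈ stdGen := by
  intro a ha
  simp only [negLoop, List.mem_cons, List.not_mem_nil, or_false] at ha
  rcases ha with h | h | h | h <;> subst h <;> simp [stdGen]

lemma exists_word (x y : ℤ) (hx : 0 ≤ x) (hy : 0 ≤ y) (z : ℝ)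
    (hlat : ∃ m : ℤ, z = (m : ℝ) + (x : ℝ) * (y : ℝ) / 2) :
    ∃ l : List (ℝ × ℝ × ℝ), (∀ a ∈ l, a ∈ stdGen) ∧ ep l = ((x : ℝ), (y : ℝ), z) := by
  obtain ⟨m, hm⟩ := hlat
  have hxy : ep (List.replicate x.toNat ((1:ℝ),(0:ℝ),(0:ℝ))
      ++ List.replicate y.toNat ((0:ℝ),(1:ℝ),(0:ℝ)))
      = ((x : ℝ), (y : ℝ), (x : ℝ) * (y : ℝ) / 2) := by
    rw [ep_append, ep_repX, ep_repY]
    have hx' : ((x.toNat : ℕ) : ℝ) = (x : ℝ) := by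
      rw [← Int.cast_natCast]; norm_cast; omega
    have hy' : ((y.toNat : ℕ) : ℝ) = (y : ℝ) := by
      rw [← Int.cast_natCast]; norm_cast; omega
    rw [hx', hy']
    simp only [Hmul, Prod.mk.injEq]
    refine ⟨by ring, by ring, by ring⟩
  have hgenxy : ∀ a ∈ (List.replicate x.toNat ((1:ℝ),(0:ℝ),(0:ℝ))
      ++ List.replicate y.toNat ((0:ℝ),(1:ℝ),(0:ℝ))), a ∈ stdGen := by
    intro a ha
    rcases List.mem_append.mp ha with h | h
    · rw [List.eq_of_mem_replicate h]; simp [stdGen]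
    · rw [List.eq_of_mem_replicate h]; simp [stdGen]
  rcases le_or_gt 0 m with hmpos | hmneg
  · refine ⟨List.flatten (List.replicate m.toNat posLoop)
      ++ (List.replicate x.toNat ((1:ℝ),(0:ℝ),(0:ℝ))
        ++ List.replicate y.toNat ((0:ℝ),(1:ℝ),(0:ℝ))), ?_, ?_⟩
    · intro a ha
      rcases List.mem_append.mp ha with h | h
      · obtain ⟨lp, hlp, halp⟩ := List.mem_flatten.mp h
        rw [List.eq_of_mem_replicate hlp] at halp
        exact gen_posLoop a halp
      · exact hgenxy a h
    · rw [ep_append, ep_posLoops, hxy]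
      have hm' : ((m.toNat : ℕ) : ℝ) = (m : ℝ) := by
        rw [← Int.cast_natCast]; norm_cast; omega
      rw [hm']
      simp only [Hmul, Prod.mk.injEq]
      refine ⟨by ring, by ring, by rw [hm]; ring⟩
  · refine ⟨List.flatten (List.replicate (-m).toNat negLoop)
      ++ (List.replicate x.toNat ((1:ℝ),(0:ℝ),(0:ℝ))
        ++ List.replicate y.toNat ((0:ℝ),(1:ℝ),(0:ℝ))), ?_, ?_⟩
    · intro a ha
      rcases List.mem_append.mp ha with h | h
      · obtain ⟨lp, hlp, halp⟩ := List.mem_flatten.mp h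
        rw [List.eq_of_mem_replicate hlp] at halp
        exact gen_negLoop a halp
      · exact hgenxy a h
    · rw [ep_append, ep_negLoops, hxy]
      have hm' : (((-m).toNat : ℕ) : ℝ) = -(m : ℝ) := by
        rw [← Int.cast_natCast]
        norm_cast
        omega
      rw [hm']
      simp only [Hmul, Prod.mk.injEq]
      refine ⟨by ring, by ring, by rw [hm]; ring⟩

/-- Word length is nondecreasing in the height coordinate above 0:
    for x, y ≥ 0 and z > 0 (with (x,y,z) ∈ H(ℤ), i.e. z ∈ ℤ + xy/2),
    |(x,y,z-1)| ≤ |(x,y,z)|. -/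
theorem wordLength_mono_in_height (x y : ℤ) (hx : 0 ≤ x) (hy : 0 ≤ y)
    (z : ℝ) (hz : 0 < z) (hlat : ∃ m : ℤ, z = (m : ℝ) + (x : ℝ) * (y : ℝ) / 2) :
    wordLength ((x : ℝ), (y : ℝ), z - 1) ≤ wordLength ((x : ℝ), (y : ℝ), z) := by
  set S : Set ℕ := {n | ∃ l : List (ℝ × ℝ × ℝ),
    l.length = n ∧ (∀ a ∈ l, a ∈ stdGen) ∧ l.foldl Hmul (0, 0, 0) = ((x:ℝ), (y:ℝ), z)}
    with hS
  have hSne : S.Nonempty := by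
    obtain ⟨l, hgen, hep⟩ := exists_word x y hx hy z hlat
    exact ⟨l.length, l, rfl, hgen, hep⟩
  have hmem : wordLength ((x:ℝ), (y:ℝ), z) ∈ S := Nat.sInf_mem hSne
  obtain ⟨l, hlen, hgen, hep⟩ := hmem
  have hepl : ep l = ((x:ℝ), (y:ℝ), z) := hep
  -- z ≥ 1/2
  have hhalf : (1:ℝ)/2 ≤ z := by
    obtain ⟨m, hm⟩ := hlat
    have h2z : (2:ℝ) * z = ((2 * m + x * y : ℤ) : ℝ) := by push_cast; rw [hm]; ring
    have : (0:ℤ) < 2 * m + x * y := by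
      by_contra h
      push_neg at h
      have : ((2 * m + x * y : ℤ) : ℝ) ≤ 0 := by exact_mod_cast h
      linarith
    have : (1:ℤ) ≤ 2 * m + x * y := this
    have : (1:ℝ) ≤ ((2 * m + x * y : ℤ) : ℝ) := by exact_mod_cast this
    linarith
  have habs : |z - 1| ≤ |(ep l).2.2| := by
    rw [hepl]
    simp only
    rw [abs_of_pos hz]
    rw [abs_le]
    constructor <;> linarith
  obtain ⟨l', hl'len, hl'gen, hl'ep⟩ := main_lemma l.length l rfl hgen (z - 1)
    ⟨-1, by rw [hepl]; push_cast; ring⟩ habs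
  rw [hepl] at hl'ep
  have : wordLength ((x:ℝ), (y:ℝ), z - 1) ≤ l.length :=
    Nat.sInf_le ⟨l', hl'len, hl'gen, hl'ep⟩
  rw [hlen] at this
  exact this
end

section
/- In the Heisenberg group, the word e₂^{-t} e₁^{x} e₂^{y+t} (with e₁^s = (s,0,0), e₂^s = (0,s,0), real exponents) has endpoint (x, y, x t + x y/2) and the sum of absolute exponents is x + y + 2t when x, y, t ≥ 0. Consequently, for integers x, y, t ≥ 0 and n = x + y + 2t, the point (x, y, xt + xy/2) ∈ H(ℤ) has word length at most n in the standard generators. -/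
/-- One-parameter subgroup through e₁: e₁^s = (s,0,0). -/
noncomputable def e1pow (s : ℝ) : ℝ × ℝ × ℝ := (s, 0, 0)

/-- One-parameter subgroup through e₂: e₂^s = (0,s,0). -/
noncomputable def e2pow (s : ℝ) : ℝ × ℝ × ℝ := (0, s, 0)

lemma foldl_e2 (c : ℝ) (n : ℕ) (p : ℝ × ℝ × ℝ) :
    List.foldl Hmul p (List.replicate n (0, c, 0))
      = (p.1, p.2.1 + n * c, p.2.2 + n * (p.1 * c) / 2) := by
  induction n generalizing p with
  | zero => simp
  | succ n ih =>
    rw [List.replicate_succ, List.foldl_cons, ih]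
    simp only [Hmul, Nat.cast_succ]
    refine Prod.ext ?_ (Prod.ext ?_ ?_) <;> simp <;> ring

lemma foldl_e1 (c : ℝ) (n : ℕ) (p : ℝ × ℝ × ℝ) :
    List.foldl Hmul p (List.replicate n (c, 0, 0))
      = (p.1 + n * c, p.2.1, p.2.2 - n * (p.2.1 * c) / 2) := by
  induction n generalizing p with
  | zero => simp
  | succ n ih =>
    rw [List.replicate_succ, List.foldl_cons, ih]
    simp only [Hmul, Nat.cast_succ]
    refine Prod.ext ?_ (Prod.ext ?_ ?_) <;> simp <;> ring

/-- The word e₂^{-t} e₁^{x} e₂^{y+t} ends at (x, y, xt + xy/2), with total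
    absolute exponent x + y + 2t when x, y, t ≥ 0; hence for natural numbers
    x, y, t, the point (x, y, xt + xy/2) has word length at most x + y + 2t. -/
theorem three_sided_word_endpoint_and_length :
    (∀ x y t : ℝ,
      Hmul (Hmul (e2pow (-t)) (e1pow x)) (e2pow (y + t))
        = (x, y, x * t + x * y / 2)) ∧
    (∀ x y t : ℕ,
      wordLength ((x : ℝ), (y : ℝ), (x : ℝ) * (t : ℝ) + (x : ℝ) * (y : ℝ) / 2)
        ≤ x + y + 2 * t) := by
  constructor
  · intro x y t
    simp only [Hmul, e1pow, e2pow]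
    refine Prod.ext ?_ (Prod.ext ?_ ?_) <;> simp <;> ring
  · intro x y t
    apply Nat.sInf_le
    refine ⟨List.replicate t (0, -1, 0) ++ List.replicate x (1, 0, 0)
      ++ List.replicate (y + t) (0, 1, 0), ?_, ?_, ?_⟩
    · simp; ring
    · intro a ha
      simp only [List.mem_append, List.mem_replicate] at ha
      rcases ha with (⟨_, h⟩ | ⟨_, h⟩) | ⟨_, h⟩ <;> simp [stdGen, h]
    · rw [List.foldl_append, List.foldl_append, foldl_e2, foldl_e1, foldl_e2]
      refine Prod.ext ?_ (Prod.ext ?_ ?_) <;> push_cast <;> simp <;> ring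
end
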